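/- arXiv:2002.00828 — 3 statements merged into one kernel-verified Lean document; each statement's English description precedes it below -/
import Mathlib

section
/- Let u ∈ ℤ_p with |u − 1| ≤ p^{-1} and let j ∈ ℤ. For x ∈ K with |x| < 1, one has log(1+x) = j·log(u) (where log(u) means log(1+(u−1))) if and only if there exist an integer n ≥ 0 and ζ ∈ K with ζ^{p^n} = 1 and 1+x = u^j ζ. In other words, the zeros of ℓ_j = log(1+x)/log u − j in the open unit disk of K are exactly the points u^j ζ − 1 with ζ a root of unity of p-power order. -/
open Filter Topology Finset IsUltrametricDist

/-- `padicLogOnePlus x` is `log(1+x)`, the sum of the series `Σ_{n ≥ 1} (-1)^{n+1} x^n / n`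
(the `n = 0` term below vanishes since division by `0` yields `0`). -/
noncomputable def padicLogOnePlus {K : Type*} [NormedField K] (x : K) : K :=
  ∑' n : ℕ, (-1 : K) ^ (n + 1) * x ^ n / (n : K)

set_option linter.unusedSectionVars false

namespace S5

variable {p : ℕ} [hp : Fact p.Prime] {K : Type*} [NormedField K] [IsUltrametricDist K]

/-- lower bound for p-adic norm of a natural number -/
lemma padic_norm_nat_ge (p : ℕ) [hp : Fact p.Prime] (k : ℕ) (hk : k ≠ 0) :
    ((k : ℝ))⁻¹ ≤ ‖(k : ℚ_[p])‖ := by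
  have hpp := hp.out
  set v := k.factorization p with hv
  have hsplit : p ^ v * (k / p ^ v) = k := Nat.ordProj_mul_ordCompl_eq_self k p
  have hm : ¬ (p ∣ (k / p ^ v)) := Nat.not_dvd_ordCompl hpp hk
  have hm1 : ‖((k / p ^ v : ℕ) : ℚ_[p])‖ = 1 := by
    refine le_antisymm (by exact_mod_cast Padic.norm_int_le_one _) ?_
    by_contra hlt
    push_neg at hlt
    have := (Padic.norm_intCast_lt_one_iff (k := ((k / p ^ v : ℕ) : ℤ))).mp (by exact_mod_cast hlt)
    exact hm (by exact_mod_cast this)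
  have hknorm : ‖(k : ℚ_[p])‖ = ((p : ℝ) ^ v)⁻¹ := by
    conv_lhs => rw [← hsplit]
    push_cast
    rw [norm_mul, norm_pow, Padic.norm_p, hm1, mul_one, inv_pow]
  rw [hknorm]
  have hle : (p : ℝ) ^ v ≤ (k : ℝ) := by
    exact_mod_cast Nat.le_of_dvd (Nat.pos_of_ne_zero hk) (Nat.ordProj_dvd k p)
  exact inv_anti₀ (by exact_mod_cast pow_pos hpp.pos v) hle

lemma prodneg_aux (R : Type*) [CommRing R] (m : ℕ) :
    (∏ i ∈ range m, -((i : R) + 1)) = (-1) ^ m * ∏ i ∈ range m, ((i : R) + 1) := by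
  induction m with
  | zero => simp
  | succ k ih => rw [prod_range_succ, prod_range_succ, ih]; ring

lemma prodfact_aux (R : Type*) [CommRing R] (m : ℕ) :
    (∏ i ∈ range m, ((i : R) + 1)) = (Nat.factorial m : R) := by
  induction m with
  | zero => simp
  | succ k ih => rw [prod_range_succ, ih, Nat.factorial_succ]; push_cast; ring

lemma choose_tendsto_padic (p : ℕ) [hp : Fact p.Prime] (m : ℕ) :
    Tendsto (fun n : ℕ => ((p ^ n - 1).choose m : ℚ_[p])) atTop (𝓝 ((-1) ^ m)) := by
  have hpp := hp.out
  have hfact : ((Nat.factorial m : ℚ_[p])) ≠ 0 := by exact_mod_cast m.factorial_ne_zero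
  -- the polynomial function
  set F : ℚ_[p] → ℚ_[p] := fun z => (∏ i ∈ range m, (z - (i + 1))) / (Nat.factorial m : ℚ_[p]) with hF
  have hcont : Continuous F := by
    apply Continuous.div_const
    exact continuous_finset_prod _ (fun i _ => continuous_id.sub continuous_const)
  have hpow : Tendsto (fun n : ℕ => ((p : ℚ_[p])) ^ n) atTop (𝓝 0) :=
    tendsto_pow_atTop_nhds_zero_of_norm_lt_one (by
      rw [Padic.norm_p]
      exact inv_lt_one_of_one_lt₀ (by exact_mod_cast hpp.one_lt))
  have hFlim : Tendsto (fun n : ℕ => F ((p : ℚ_[p]) ^ n)) atTop (𝓝 (F 0)) :=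
    (hcont.tendsto 0).comp hpow
  have hprodneg := prodneg_aux ℚ_[p] m
  have hprodfact := prodfact_aux ℚ_[p] m
  have hF0 : F 0 = (-1) ^ m := by
    rw [hF]
    simp only [zero_sub]
    rw [hprodneg, hprodfact]
    field_simp
  rw [hF0] at hFlim
  refine hFlim.congr' ?_
  filter_upwards [Filter.eventually_atTop.mpr ⟨m + 1, fun n hn => hn⟩] with n hn
  -- for n ≥ m+1 : p^n ≥ m+1
  have hNm : m + 1 ≤ p ^ n := by
    have h1 : n < p ^ n := Nat.lt_pow_self hpp.one_lt
    omega
  have key : ∀ i ∈ range m, ((p : ℚ_[p]) ^ n - ((i : ℚ_[p]) + 1))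
      = (((p ^ n - 1 - i : ℕ)) : ℚ_[p]) := by
    intro i hi
    rw [mem_range] at hi
    rw [Nat.sub_sub, Nat.cast_sub (by omega : 1 + i ≤ p ^ n)]
    push_cast
    ring
  show F ((p : ℚ_[p]) ^ n) = ((p ^ n - 1).choose m : ℚ_[p])
  rw [hF]
  simp only []
  rw [prod_congr rfl key, ← Nat.cast_prod,
    show (∏ i ∈ range m, (p ^ n - 1 - i)) = (p ^ n - 1).descFactorial m from
      (Nat.descFactorial_eq_prod_range _ m).symm,
    Nat.descFactorial_eq_factorial_mul_choose]
  push_cast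
  rw [mul_comm, mul_div_assoc, div_self hfact, mul_one]

section WithhK
variable (hK : ∀ q : ℚ, ‖(q : K)‖ = ‖(q : ℚ_[p])‖)
include hK

lemma norm_natK (k : ℕ) : ‖(k : K)‖ = ‖(k : ℚ_[p])‖ := by
  have := hK (k : ℚ)
  rwa [Rat.cast_natCast, Rat.cast_natCast] at this

lemma norm_intK (k : ℤ) : ‖(k : K)‖ = ‖(k : ℚ_[p])‖ := by
  have := hK (k : ℚ)
  rwa [Rat.cast_intCast, Rat.cast_intCast] at this

lemma charZeroK : CharZero K := by
  refine ⟨fun a b hab => ?_⟩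
  have h : ((a : ℤ) : K) = ((b : ℤ) : K) := by push_cast; exact_mod_cast hab
  have h2 : (((a : ℤ) - b : ℤ) : K) = 0 := by push_cast at h ⊢; rw [h]; ring
  have h3 : ‖(((a : ℤ) - b : ℤ) : K)‖ = 0 := by rw [h2, norm_zero]
  rw [norm_intK hK] at h3
  have h4 : (((a : ℤ) - b : ℤ) : ℚ_[p]) = 0 := by rwa [norm_eq_zero] at h3
  have h5 : ((a : ℤ) - b : ℤ) = 0 := by exact_mod_cast h4
  omega

lemma norm_pK : ‖(p : K)‖ = (p : ℝ)⁻¹ := by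
  rw [norm_natK hK, Padic.norm_p]

lemma norm_div_natK (y : K) (k : ℕ) : ‖y / (k : K)‖ ≤ k * ‖y‖ := by
  rcases eq_or_ne k 0 with rfl | hk
  · simp
  · have hknorm : ((k : ℝ))⁻¹ ≤ ‖(k : K)‖ := (norm_natK hK k) ▸ padic_norm_nat_ge p k hk
    have hkpos : (0 : ℝ) < ((k : ℝ))⁻¹ := by positivity
    rw [norm_div]
    rw [div_le_iff₀ (lt_of_lt_of_le hkpos hknorm)]
    calc ‖y‖ = (k : ℝ) * ‖y‖ * (k : ℝ)⁻¹ := by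
          field_simp
      _ ≤ (k : ℝ) * ‖y‖ * ‖(k : K)‖ := by
          refine mul_le_mul_of_nonneg_left hknorm (by positivity)


lemma tendsto_ratK (c : ℕ → ℚ) (L : ℚ)
    (h : Tendsto (fun n => ((c n : ℚ_[p]))) atTop (𝓝 (L : ℚ_[p]))) :
    Tendsto (fun n => ((c n : K))) atTop (𝓝 (L : K)) := by
  haveI := charZeroK hK
  rw [tendsto_iff_norm_sub_tendsto_zero] at h ⊢
  refine h.congr fun n => ?_
  have e1 : (c n : K) - (L : K) = ((c n - L : ℚ) : K) := (Rat.cast_sub _ _).symm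
  have e2 : (c n : ℚ_[p]) - (L : ℚ_[p]) = ((c n - L : ℚ) : ℚ_[p]) := (Rat.cast_sub _ _).symm
  rw [e2, e1, hK]

lemma choose_tendsto_K (m : ℕ) :
    Tendsto (fun n : ℕ => ((p ^ n - 1).choose m : K)) atTop (𝓝 ((-1) ^ m)) := by
  have h2 : Tendsto (fun n : ℕ => (((p ^ n - 1).choose m : ℚ) : ℚ_[p])) atTop
      (𝓝 (((-1) ^ m : ℚ) : ℚ_[p])) := by
    have := choose_tendsto_padic p m
    push_cast
    exact this
  have h3 := tendsto_ratK hK (fun n => ((p ^ n - 1).choose m : ℚ)) ((-1) ^ m) h2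
  push_cast at h3
  exact h3

lemma summable_bound {x : K} (hx : ‖x‖ < 1) :
    Summable (fun k : ℕ => (k : ℝ) * ‖x‖ ^ k) := by
  have := summable_pow_mul_geometric_of_norm_lt_one (R := ℝ) 1 (r := ‖x‖)
    (by rwa [Real.norm_eq_abs, abs_of_nonneg (norm_nonneg x)])
  simpa using this

lemma norm_term_le (c : ℕ) (x : K) (k : ℕ) :
    ‖(c : K) * x ^ k / (k : K)‖ ≤ (k : ℝ) * ‖x‖ ^ k := by
  calc ‖(c : K) * x ^ k / (k : K)‖ ≤ k * ‖(c : K) * x ^ k‖ := norm_div_natK hK _ k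
    _ ≤ k * ‖x‖ ^ k := by
        rw [norm_mul, norm_pow]
        refine mul_le_mul_of_nonneg_left ?_ (Nat.cast_nonneg k)
        calc ‖(c : K)‖ * ‖x‖ ^ k ≤ 1 * ‖x‖ ^ k :=
          mul_le_mul_of_nonneg_right (IsUltrametricDist.norm_natCast_le_one K c) (by positivity)
        _ = ‖x‖ ^ k := one_mul _

lemma norm_term_le' (x : K) (k : ℕ) :
    ‖(-1 : K) ^ (k + 1) * x ^ k / (k : K)‖ ≤ (k : ℝ) * ‖x‖ ^ k := by
  calc ‖(-1 : K) ^ (k + 1) * x ^ k / (k : K)‖ ≤ k * ‖(-1 : K) ^ (k + 1) * x ^ k‖ :=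
      norm_div_natK hK _ k
    _ ≤ k * ‖x‖ ^ k := by
        rw [norm_mul, norm_pow, norm_pow, norm_neg, norm_one, one_pow, one_mul]

lemma summable_log {x : K} (hx : ‖x‖ < 1) [CompleteSpace K] :
    Summable (fun k : ℕ => (-1 : K) ^ (k + 1) * x ^ k / (k : K)) :=
  Summable.of_norm_bounded (summable_bound hK hx) (norm_term_le' hK x)
end WithhK

section WithhK
variable (hK : ∀ q : ℚ, ‖(q : K)‖ = ‖(q : ℚ_[p])‖)
include hK

/-- the finite binomial identity -/
lemma pow_sub_one_div_eq_tsum (x : K) (N : ℕ) (hN : N ≠ 0) :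
    ((1 + x) ^ N - 1) / (N : K) = ∑' k : ℕ, ((N - 1).choose (k - 1) : K) * x ^ k / (k : K) := by
  haveI : CharZero K := charZeroK hK
  have h1 : ∑' k : ℕ, ((N - 1).choose (k - 1) : K) * x ^ k / (k : K)
      = ∑ k ∈ range (N + 1), ((N - 1).choose (k - 1) : K) * x ^ k / (k : K) := by
    refine tsum_eq_sum fun k hk => ?_
    rw [mem_range, not_lt] at hk
    have : N - 1 < k - 1 := by omega
    rw [Nat.choose_eq_zero_of_lt this]
    simp
  rw [h1, Finset.sum_range_succ']
  simp only [Nat.zero_sub, Nat.choose_zero_right, Nat.cast_one, pow_zero, Nat.cast_zero, div_zero,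
    add_zero, Nat.add_sub_cancel]
  have h2 : (1 + x) ^ N = ∑ k ∈ range (N + 1), x ^ k * (N.choose k : K) := by
    rw [add_comm 1 x, add_pow]
    exact Finset.sum_congr rfl fun k _ => by rw [one_pow, mul_one]
  rw [h2, Finset.sum_range_succ']
  simp only [pow_zero, Nat.choose_zero_right, Nat.cast_one, one_mul]
  rw [add_sub_cancel_right, Finset.sum_div]
  refine Finset.sum_congr rfl fun m hm => ?_
  rw [mem_range] at hm
  have h3 : N * ((N - 1).choose m) = (N.choose (m + 1)) * (m + 1) := by
    have := Nat.add_one_mul_choose_eq (N - 1) m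
    rwa [Nat.sub_add_cancel (by omega : 1 ≤ N)] at this
  have hNK : (N : K) ≠ 0 := Nat.cast_ne_zero.mpr hN
  have hm1K : ((m + 1 : ℕ) : K) ≠ 0 := Nat.cast_ne_zero.mpr (Nat.succ_ne_zero m)
  rw [div_eq_div_iff hNK hm1K]
  have key : (N : K) * ((N - 1).choose m : K) = (N.choose (m + 1) : K) * ((m + 1 : ℕ) : K) := by
    exact_mod_cast h3
  linear_combination (-1 : K) * x ^ (m + 1) * key

/-- Lemma A : limit representation of the log -/
lemma log_eq_lim {x : K} (hx : ‖x‖ < 1) [CompleteSpace K] :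
    Tendsto (fun n : ℕ => ((1 + x) ^ (p ^ n) - 1) / ((p ^ n : ℕ) : K)) atTop (𝓝 (padicLogOnePlus x)) := by
  have hterm : ∀ k : ℕ, Tendsto (fun n : ℕ => ((p ^ n - 1).choose (k - 1) : K) * x ^ k / (k : K))
      atTop (𝓝 ((-1 : K) ^ (k + 1) * x ^ k / (k : K))) := by
    intro k
    rcases Nat.eq_zero_or_pos k with rfl | hk
    · simpa using tendsto_const_nhds
    · have h1 := (choose_tendsto_K hK (k - 1)).mul_const (x ^ k / (k : K))
      have h2 : (-1 : K) ^ (k - 1) = (-1 : K) ^ (k + 1) := by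
        have hk1 : k - 1 + 2 = k + 1 := by omega
        rw [← hk1, pow_add]
        simp
      simp only [mul_div_assoc] at h1 ⊢
      rwa [h2] at h1
  have hmain := tendsto_tsum_of_dominated_convergence (f := fun (n : ℕ) (k : ℕ) =>
      ((p ^ n - 1).choose (k - 1) : K) * x ^ k / (k : K))
      (g := fun k : ℕ => (-1 : K) ^ (k + 1) * x ^ k / (k : K))
      (bound := fun k : ℕ => (k : ℝ) * ‖x‖ ^ k)
      (summable_bound hK hx) hterm
      (Filter.Eventually.of_forall fun n k => norm_term_le hK _ x k)
  refine hmain.congr fun n => ?_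
  exact (pow_sub_one_div_eq_tsum hK x (p ^ n) (pow_ne_zero n hp.out.ne_zero)).symm

end WithhK

lemma pow_p_step (hK : ∀ q : ℚ, ‖(q : K)‖ = ‖(q : ℚ_[p])‖) {s : K} (hs : ‖s‖ < 1) :
    ‖(1 + s) ^ p - 1‖ ≤ ‖s‖ * max ‖s‖ (p : ℝ)⁻¹ := by
  have hpp := hp.out
  have h2 : (1 + s) ^ p = ∑ k ∈ range (p + 1), s ^ k * (p.choose k : K) := by
    rw [add_comm 1 s, add_pow]
    exact Finset.sum_congr rfl fun k _ => by rw [one_pow, mul_one]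
  have h3 : (1 + s) ^ p - 1 = ∑ m ∈ range p, s ^ (m + 1) * (p.choose (m + 1) : K) := by
    rw [h2, Finset.sum_range_succ']
    simp
  rw [h3]
  refine norm_sum_le_of_forall_le_of_nonneg ?_ fun m hm => ?_
  · positivity
  · rw [mem_range] at hm
    rcases eq_or_ne (m + 1) p with hmp | hmp
    · -- top term : ‖s^p‖ = ‖s‖^p ≤ ‖s‖ * ‖s‖
      rw [hmp, Nat.choose_self, Nat.cast_one, mul_one, norm_pow]
      calc ‖s‖ ^ p ≤ ‖s‖ ^ 2 := pow_le_pow_of_le_one (norm_nonneg s) hs.le hpp.two_le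
        _ = ‖s‖ * ‖s‖ := sq ‖s‖
        _ ≤ ‖s‖ * max ‖s‖ (p : ℝ)⁻¹ := by
            exact mul_le_mul_of_nonneg_left (le_max_left _ _) (norm_nonneg s)
    · -- middle terms : p ∣ choose
      have hdvd : p ∣ p.choose (m + 1) := hpp.dvd_choose_self (Nat.succ_ne_zero m)
        (by omega)
      obtain ⟨c, hc⟩ := hdvd
      rw [norm_mul, hc]
      push_cast
      rw [norm_mul, norm_pK hK, norm_pow]
      calc ‖s‖ ^ (m + 1) * ((p : ℝ)⁻¹ * ‖(c : K)‖)
          ≤ ‖s‖ ^ (m + 1) * ((p : ℝ)⁻¹ * 1) := by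
            refine mul_le_mul_of_nonneg_left (mul_le_mul_of_nonneg_left
              (norm_natCast_le_one K c) (by positivity)) (by positivity)
        _ = ‖s‖ ^ (m + 1) * (p : ℝ)⁻¹ := by ring
        _ ≤ ‖s‖ * (p : ℝ)⁻¹ := by
            refine mul_le_mul_of_nonneg_right ?_ (by positivity)
            calc ‖s‖ ^ (m + 1) ≤ ‖s‖ ^ 1 :=
              pow_le_pow_of_le_one (norm_nonneg s) hs.le (by omega)
            _ = ‖s‖ := pow_one _
        _ ≤ ‖s‖ * max ‖s‖ (p : ℝ)⁻¹ :=
            mul_le_mul_of_nonneg_left (le_max_right _ _) (norm_nonneg s)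

lemma pow_p_decay (hK : ∀ q : ℚ, ‖(q : K)‖ = ‖(q : ℚ_[p])‖) {t : K} (ht : ‖t‖ < 1) (n : ℕ) :
    ‖(1 + t) ^ (p ^ n) - 1‖ ≤ ‖t‖ * (max ‖t‖ (p : ℝ)⁻¹) ^ n := by
  have hpp := hp.out
  have hr1 : max ‖t‖ (p : ℝ)⁻¹ < 1 := by
    refine max_lt ht (inv_lt_one_of_one_lt₀ (by exact_mod_cast hpp.one_lt))
  have hr0 : 0 ≤ max ‖t‖ (p : ℝ)⁻¹ := le_trans (norm_nonneg t) (le_max_left _ _)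
  induction n with
  | zero => simp
  | succ n ih =>
    set s := (1 + t) ^ (p ^ n) - 1 with hsdef
    have hsn : ‖s‖ ≤ ‖t‖ * (max ‖t‖ (p : ℝ)⁻¹) ^ n := ih
    have hs1 : ‖s‖ < 1 := by
      refine lt_of_le_of_lt hsn (lt_of_le_of_lt ?_ ht)
      calc ‖t‖ * (max ‖t‖ (p : ℝ)⁻¹) ^ n ≤ ‖t‖ * 1 := by
            refine mul_le_mul_of_nonneg_left (pow_le_one₀ hr0 hr1.le) (norm_nonneg t)
        _ = ‖t‖ := mul_one _
    have hst : ‖s‖ ≤ ‖t‖ := by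
      refine le_trans hsn ?_
      calc ‖t‖ * (max ‖t‖ (p : ℝ)⁻¹) ^ n ≤ ‖t‖ * 1 :=
            mul_le_mul_of_nonneg_left (pow_le_one₀ hr0 hr1.le) (norm_nonneg t)
        _ = ‖t‖ := mul_one _
    have heq : (1 + t) ^ (p ^ (n + 1)) = (1 + s) ^ p := by
      rw [hsdef, show (1 : K) + ((1 + t) ^ (p ^ n) - 1) = (1 + t) ^ (p ^ n) by ring,
        ← pow_mul, ← pow_succ]
    rw [heq]
    calc ‖(1 + s) ^ p - 1‖ ≤ ‖s‖ * max ‖s‖ (p : ℝ)⁻¹ := pow_p_step hK hs1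
      _ ≤ (‖t‖ * (max ‖t‖ (p : ℝ)⁻¹) ^ n) * max ‖t‖ (p : ℝ)⁻¹ := by
          refine mul_le_mul hsn (max_le_max hst (le_refl _)) ?_ (by positivity)
          exact le_trans (norm_nonneg s) (le_max_left _ _)
      _ = ‖t‖ * (max ‖t‖ (p : ℝ)⁻¹) ^ (n + 1) := by ring

lemma pow_p_decay' (hK : ∀ q : ℚ, ‖(q : K)‖ = ‖(q : ℚ_[p])‖) {t : K} (ht : ‖t‖ < 1) :
    ∃ C : ℝ, 0 ≤ C ∧ ∀ n : ℕ, ‖(1 + t) ^ (p ^ n) - 1‖ ≤ C * ((p : ℝ)⁻¹) ^ n := by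
  have hpp := hp.out
  have hp1 : (1 : ℝ) < p := by exact_mod_cast hpp.one_lt
  have hpinv : (0 : ℝ) < (p : ℝ)⁻¹ := by positivity
  have hr1 : max ‖t‖ (p : ℝ)⁻¹ < 1 := max_lt ht (inv_lt_one_of_one_lt₀ hp1)
  have hr0 : 0 ≤ max ‖t‖ (p : ℝ)⁻¹ := le_trans (norm_nonneg t) (le_max_left _ _)
  -- find n₀ with ‖t‖ * r ^ n₀ ≤ p⁻¹
  obtain ⟨n₀, hn₀⟩ : ∃ n₀ : ℕ, ‖t‖ * (max ‖t‖ (p : ℝ)⁻¹) ^ n₀ ≤ (p : ℝ)⁻¹ := by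
    have := tendsto_pow_atTop_nhds_zero_of_lt_one hr0 hr1
    have h2 := this.const_mul ‖t‖
    rw [mul_zero] at h2
    have h3 := h2.eventually_le_const hpinv
    obtain ⟨n₀, hn₀⟩ := h3.exists
    exact ⟨n₀, hn₀⟩
  -- for k : ‖t_{n₀+k}‖ ≤ p⁻¹ * (p⁻¹)^k
  have hstep : ∀ k : ℕ, ‖(1 + t) ^ (p ^ (n₀ + k)) - 1‖ ≤ (p : ℝ)⁻¹ * ((p : ℝ)⁻¹) ^ k := by
    intro k
    induction k with
    | zero =>
      simpa using le_trans (pow_p_decay hK ht n₀) hn₀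
    | succ k ih =>
      set s := (1 + t) ^ (p ^ (n₀ + k)) - 1 with hsdef
      have hs1 : ‖s‖ < 1 := by
        refine lt_of_le_of_lt ih ?_
        calc (p : ℝ)⁻¹ * ((p : ℝ)⁻¹) ^ k ≤ (p : ℝ)⁻¹ * 1 :=
            mul_le_mul_of_nonneg_left (pow_le_one₀ hpinv.le (inv_le_one_of_one_le₀ hp1.le))
              hpinv.le
          _ = (p : ℝ)⁻¹ := mul_one _
          _ < 1 := inv_lt_one_of_one_lt₀ hp1
      have heq : (1 + t) ^ (p ^ (n₀ + (k + 1))) = (1 + s) ^ p := by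
        rw [hsdef, show (1 : K) + ((1 + t) ^ (p ^ (n₀ + k)) - 1) = (1 + t) ^ (p ^ (n₀ + k)) by
          ring, ← pow_mul, ← pow_succ, ← Nat.add_assoc]
      rw [heq]
      have hsmax : max ‖s‖ (p : ℝ)⁻¹ = (p : ℝ)⁻¹ := by
        refine max_eq_right (le_trans ih ?_)
        calc (p : ℝ)⁻¹ * ((p : ℝ)⁻¹) ^ k ≤ (p : ℝ)⁻¹ * 1 :=
            mul_le_mul_of_nonneg_left (pow_le_one₀ hpinv.le (inv_le_one_of_one_le₀ hp1.le))
              hpinv.le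
          _ = (p : ℝ)⁻¹ := mul_one _
      calc ‖(1 + s) ^ p - 1‖ ≤ ‖s‖ * max ‖s‖ (p : ℝ)⁻¹ := pow_p_step hK hs1
        _ = ‖s‖ * (p : ℝ)⁻¹ := by rw [hsmax]
        _ ≤ ((p : ℝ)⁻¹ * ((p : ℝ)⁻¹) ^ k) * (p : ℝ)⁻¹ :=
            mul_le_mul_of_nonneg_right ih hpinv.le
        _ = (p : ℝ)⁻¹ * ((p : ℝ)⁻¹) ^ (k + 1) := by ring
  refine ⟨(p : ℝ) ^ n₀, by positivity, fun n => ?_⟩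
  rcases le_or_gt n₀ n with hn | hn
  · obtain ⟨k, rfl⟩ := Nat.exists_eq_add_of_le hn
    calc ‖(1 + t) ^ (p ^ (n₀ + k)) - 1‖ ≤ (p : ℝ)⁻¹ * ((p : ℝ)⁻¹) ^ k := hstep k
      _ ≤ 1 * ((p : ℝ)⁻¹) ^ k := by
          refine mul_le_mul_of_nonneg_right (inv_le_one_of_one_le₀ hp1.le) (by positivity)
      _ = (p : ℝ) ^ n₀ * ((p : ℝ)⁻¹) ^ (n₀ + k) := by
          rw [pow_add]
          field_simp
          rw [one_div_pow, mul_one_div_cancel (by positivity)]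
  · calc ‖(1 + t) ^ (p ^ n) - 1‖ ≤ ‖t‖ * (max ‖t‖ (p : ℝ)⁻¹) ^ n := pow_p_decay hK ht n
      _ ≤ 1 * 1 := by
          refine mul_le_mul ht.le (pow_le_one₀ hr0 hr1.le) (by positivity) one_pos.le
      _ = 1 := mul_one 1
      _ ≤ (p : ℝ) ^ n₀ * ((p : ℝ)⁻¹) ^ n := by
          have hpn : (p : ℝ) ^ n ≤ (p : ℝ) ^ n₀ := pow_le_pow_right₀ hp1.le hn.le
          calc (1 : ℝ) = (p : ℝ) ^ n * ((p : ℝ)⁻¹) ^ n := by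
                rw [inv_pow, mul_inv_cancel₀ (by positivity)]
            _ ≤ (p : ℝ) ^ n₀ * ((p : ℝ)⁻¹) ^ n :=
                mul_le_mul_of_nonneg_right hpn (by positivity)

lemma norm_sub_le_max' (x y : K) : ‖x - y‖ ≤ max ‖x‖ ‖y‖ := by
  rw [sub_eq_add_neg]
  exact le_trans (norm_add_le_max x (-y)) (by rw [norm_neg])

section Disc
variable {a b : K}

lemma norm_eq_one_of_dist_lt (ha : ‖a - 1‖ < 1) : ‖a‖ = 1 := by
  have h1 : ‖a‖ ≤ 1 := by
    have := norm_add_le_max (a - 1) 1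
    rw [sub_add_cancel, norm_one] at this
    exact le_trans this (max_le ha.le le_rfl)
  rcases lt_or_eq_of_le h1 with h2 | h2
  · exfalso
    have h3 : (1 : ℝ) = ‖a - (a - 1)‖ := by rw [sub_sub_cancel, norm_one]
    have h4 := norm_sub_le_max' a (a - 1)
    rw [← h3] at h4
    have := max_lt h2 ha
    linarith
  · exact h2

lemma ne_zero_of_dist_lt (ha : ‖a - 1‖ < 1) : a ≠ 0 := by
  intro h
  rw [h, zero_sub, norm_neg, norm_one] at ha
  exact lt_irrefl 1 ha

lemma pow_mem_disc (ha : ‖a - 1‖ < 1) (m : ℕ) : ‖a ^ m - 1‖ ≤ ‖a - 1‖ := by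
  induction m with
  | zero => simpa using norm_nonneg _
  | succ m ih =>
    have key : a ^ (m + 1) - 1 = a ^ m * (a - 1) + (a ^ m - 1) := by ring
    rw [key]
    refine le_trans (norm_add_le_max _ _) (max_le ?_ ih)
    rw [norm_mul, norm_pow, norm_eq_one_of_dist_lt ha, one_pow, one_mul]

lemma inv_mem_disc (ha : ‖a - 1‖ < 1) : ‖a⁻¹ - 1‖ = ‖a - 1‖ := by
  have hne : a ≠ 0 := ne_zero_of_dist_lt ha
  have key : a⁻¹ - 1 = (1 - a) * a⁻¹ := by field_simp
  rw [key, norm_mul, norm_inv, norm_eq_one_of_dist_lt ha, inv_one, mul_one, norm_sub_rev]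

lemma zpow_mem_disc (ha : ‖a - 1‖ < 1) (j : ℤ) : ‖a ^ j - 1‖ ≤ ‖a - 1‖ := by
  rcases j with n | n
  · rw [Int.ofNat_eq_coe, zpow_natCast]
    exact pow_mem_disc ha n
  · rw [zpow_negSucc]
    rw [inv_mem_disc (lt_of_le_of_lt (pow_mem_disc ha (n + 1)) ha)]
    exact pow_mem_disc ha (n + 1)

end Disc

lemma padicLogOnePlus_zero : padicLogOnePlus (0 : K) = 0 := by
  rw [padicLogOnePlus]
  refine (tsum_congr fun n => ?_).trans tsum_zero
  rcases n with _ | n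
  · simp
  · simp [zero_pow (Nat.succ_ne_zero n)]

section Main
variable [CompleteSpace K] (hK : ∀ q : ℚ, ‖(q : K)‖ = ‖(q : ℚ_[p])‖)
include hK

/-- additivity of the log -/
lemma log_mul {a b : K} (ha : ‖a - 1‖ < 1) (hb : ‖b - 1‖ < 1) :
    padicLogOnePlus (a * b - 1) = padicLogOnePlus (a - 1) + padicLogOnePlus (b - 1) := by
  have hpp := hp.out
  have hp1 : (1 : ℝ) < p := by exact_mod_cast hpp.one_lt
  have hab : ‖a * b - 1‖ < 1 := by
    have key : a * b - 1 = (a - 1) * (b - 1) + ((a - 1) + (b - 1)) := by ring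
    rw [key]
    refine lt_of_le_of_lt (norm_add_le_max _ _) (max_lt ?_
      (lt_of_le_of_lt (norm_add_le_max _ _) (max_lt ha hb)))
    rw [norm_mul]
    exact lt_of_le_of_lt (mul_le_of_le_one_right (norm_nonneg _) hb.le) ha
  have Ha := log_eq_lim hK (x := a - 1) ha
  have Hb := log_eq_lim hK (x := b - 1) hb
  have Hab := log_eq_lim hK (x := a * b - 1) hab
  simp only [show (1 : K) + (a - 1) = a from by ring] at Ha
  simp only [show (1 : K) + (b - 1) = b from by ring] at Hb
  simp only [show (1 : K) + (a * b - 1) = a * b from by ring] at Hab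
  obtain ⟨Ca, hCa0, hCa⟩ := pow_p_decay' hK (t := a - 1) ha
  obtain ⟨Cb, hCb0, hCb⟩ := pow_p_decay' hK (t := b - 1) hb
  simp only [show (1 : K) + (a - 1) = a from by ring] at hCa
  simp only [show (1 : K) + (b - 1) = b from by ring] at hCb
  have hnormP : ∀ n : ℕ, ‖((p ^ n : ℕ) : K)‖ = ((p : ℝ)⁻¹) ^ n := by
    intro n
    rw [Nat.cast_pow, norm_pow, norm_pK hK]
  have Hcross : Tendsto (fun n : ℕ => (a ^ p ^ n - 1) * (b ^ p ^ n - 1) / ((p ^ n : ℕ) : K))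
      atTop (𝓝 0) := by
    have hpinvpos : (0 : ℝ) < (p : ℝ)⁻¹ := by positivity
    refine squeeze_zero_norm (a := fun n => (Ca * Cb) * ((p : ℝ)⁻¹) ^ n) (fun n => ?_) ?_
    · rw [norm_div, norm_mul, hnormP]
      rw [div_le_iff₀ (by positivity)]
      calc ‖a ^ p ^ n - 1‖ * ‖b ^ p ^ n - 1‖
          ≤ (Ca * ((p : ℝ)⁻¹) ^ n) * (Cb * ((p : ℝ)⁻¹) ^ n) := by
            refine mul_le_mul (hCa n) (hCb n) (norm_nonneg _) (by positivity)
        _ = Ca * Cb * ((p : ℝ)⁻¹) ^ n * ((p : ℝ)⁻¹) ^ n := by ring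
    · have h0 := tendsto_pow_atTop_nhds_zero_of_lt_one hpinvpos.le
        (inv_lt_one_of_one_lt₀ hp1)
      have := h0.const_mul (Ca * Cb)
      rwa [mul_zero] at this
  have Hsum := (Ha.add Hb).add Hcross
  have Hsame : ∀ n : ℕ, (a ^ p ^ n - 1) / ((p ^ n : ℕ) : K) + (b ^ p ^ n - 1) / ((p ^ n : ℕ) : K)
      + (a ^ p ^ n - 1) * (b ^ p ^ n - 1) / ((p ^ n : ℕ) : K)
      = ((a * b) ^ p ^ n - 1) / ((p ^ n : ℕ) : K) := by
    intro n
    rw [mul_pow]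
    ring
  have := Hsum.congr Hsame
  have huniq := tendsto_nhds_unique Hab this
  rw [huniq, add_zero]

lemma log_pow {a : K} (ha : ‖a - 1‖ < 1) (m : ℕ) :
    padicLogOnePlus (a ^ m - 1) = (m : K) * padicLogOnePlus (a - 1) := by
  induction m with
  | zero => simp [padicLogOnePlus_zero]
  | succ m ih =>
    have ham : ‖a ^ m - 1‖ < 1 := lt_of_le_of_lt (pow_mem_disc ha m) ha
    rw [pow_succ, log_mul hK ham ha, ih]
    push_cast
    ring

lemma log_inv {a : K} (ha : ‖a - 1‖ < 1) :
    padicLogOnePlus (a⁻¹ - 1) = - padicLogOnePlus (a - 1) := by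
  have hne : a ≠ 0 := ne_zero_of_dist_lt ha
  have hai : ‖a⁻¹ - 1‖ < 1 := by rw [inv_mem_disc ha]; exact ha
  have h := log_mul hK ha hai
  rw [mul_inv_cancel₀ hne, sub_self, padicLogOnePlus_zero] at h
  exact (eq_neg_of_add_eq_zero_right h.symm)

lemma log_zpow {a : K} (ha : ‖a - 1‖ < 1) (j : ℤ) :
    padicLogOnePlus (a ^ j - 1) = (j : K) * padicLogOnePlus (a - 1) := by
  rcases j with n | n
  · rw [Int.ofNat_eq_coe, zpow_natCast, log_pow hK ha n]
    norm_num
  · rw [zpow_negSucc, log_inv hK (lt_of_le_of_lt (pow_mem_disc ha (n + 1)) ha),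
      log_pow hK ha (n + 1), Int.cast_negSucc]
    push_cast
    ring

/-- injectivity of log near 0 -/
lemma log_eq_zero_small {t : K} (ht : ‖t‖ ≤ ((p : ℝ)⁻¹) ^ 2)
    (h0 : padicLogOnePlus t = 0) : t = 0 := by
  have hpp := hp.out
  have hp2 : (2 : ℝ) ≤ p := by exact_mod_cast hpp.two_le
  have ht4 : ‖t‖ ≤ (1 / 4 : ℝ) := by
    refine le_trans ht ?_
    calc ((p : ℝ)⁻¹) ^ 2 ≤ ((2 : ℝ)⁻¹) ^ 2 := by
          refine pow_le_pow_left₀ (by positivity) ?_ 2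
          exact inv_anti₀ (by norm_num) hp2
      _ = 1 / 4 := by norm_num
  have ht1 : ‖t‖ < 1 := lt_of_le_of_lt ht4 (by norm_num)
  have hsum := summable_log hK ht1
  have hsplit := hsum.tsum_eq_add_tsum_ite 1
  have hf1 : (-1 : K) ^ (1 + 1) * t ^ 1 / ((1 : ℕ) : K) = t := by norm_num
  rw [hf1] at hsplit
  -- aux real bound
  have haux : ∀ k : ℕ, ((k + 2 : ℕ) : ℝ) * (1 / 4) ^ (k + 1) ≤ 1 / 2 := by
    intro k
    induction k with
    | zero => norm_num
    | succ k ih =>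
      push_cast at ih ⊢
      have h14 : (0:ℝ) < (1/4 : ℝ) ^ (k + 1) := by positivity
      have step : ((k:ℝ) + 1 + 2) * (1/4 : ℝ) ^ (k + 1 + 1)
          ≤ (1/2) * (((k:ℝ) + 2) * (1/4 : ℝ) ^ (k + 1)) := by
        rw [pow_succ]
        nlinarith [h14]
      nlinarith [step, ih]
  have hR : ‖∑' n : ℕ, if n = 1 then 0 else (-1 : K) ^ (n + 1) * t ^ n / (n : K)‖
      ≤ ‖t‖ * (1 / 2) := by
    refine norm_tsum_le_of_forall_le_of_nonneg (by positivity) fun n => ?_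
    rcases n with _ | _ | k
    · rw [if_neg (by omega : ¬ (0 : ℕ) = 1)]
      have h00 : ((-1 : K)) ^ (0 + 1) * t ^ 0 / ((0 : ℕ) : K) = 0 := by norm_num
      rw [h00, norm_zero]
      positivity
    · rw [if_pos rfl, norm_zero]
      positivity
    · have hb := norm_term_le' hK t (k + 2)
      have h2 : ‖t‖ ^ (k + 2) ≤ ‖t‖ * (1 / 4) ^ (k + 1) := by
        rw [pow_succ'] -- ‖t‖^(k+2) = ‖t‖ * ‖t‖^(k+1)?
        exact mul_le_mul_of_nonneg_left (pow_le_pow_left₀ (norm_nonneg t) ht4 (k + 1))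
          (norm_nonneg t)
      simp only [if_neg (by omega : ¬ k + 2 = 1)]
      calc ‖(-1 : K) ^ (k + 2 + 1) * t ^ (k + 2) / ((k + 2 : ℕ) : K)‖
          ≤ ((k + 2 : ℕ) : ℝ) * ‖t‖ ^ (k + 2) := hb
        _ ≤ ((k + 2 : ℕ) : ℝ) * (‖t‖ * (1 / 4) ^ (k + 1)) := by
            exact mul_le_mul_of_nonneg_left h2 (Nat.cast_nonneg _)
        _ = ‖t‖ * (((k + 2 : ℕ) : ℝ) * (1 / 4) ^ (k + 1)) := by ring
        _ ≤ ‖t‖ * (1 / 2) := mul_le_mul_of_nonneg_left (haux k) (norm_nonneg t)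
  rw [padicLogOnePlus] at h0
  rw [hsplit] at h0
  -- h0 : t + R = 0
  have hteq : t = -(∑' n : ℕ, if n = 1 then 0 else (-1 : K) ^ (n + 1) * t ^ n / (n : K)) := by
    linear_combination h0
  have hnorm : ‖t‖ = ‖∑' n : ℕ, if n = 1 then 0 else (-1 : K) ^ (n + 1) * t ^ n / (n : K)‖ := by
    conv_lhs => rw [hteq, norm_neg]
  have ht0 : ‖t‖ ≤ 0 := by linarith [hR, hnorm.le, hnorm.ge]

  exact norm_le_zero_iff.mp ht0

/-- kernel of log : p-power roots of unity -/
lemma exists_pow_eq_one {a : K} (ha : ‖a - 1‖ < 1)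
    (h0 : padicLogOnePlus (a - 1) = 0) : ∃ n : ℕ, a ^ (p ^ n) = 1 := by
  haveI : CharZero K := charZeroK hK
  have hpp := hp.out
  have hp1 : (1 : ℝ) < p := by exact_mod_cast hpp.one_lt
  have hr1 : max ‖a - 1‖ (p : ℝ)⁻¹ < 1 := max_lt ha (inv_lt_one_of_one_lt₀ hp1)
  have hr0 : (0:ℝ) ≤ max ‖a - 1‖ (p : ℝ)⁻¹ := le_trans (norm_nonneg _) (le_max_left _ _)
  obtain ⟨n, hn⟩ : ∃ n : ℕ, ‖a - 1‖ * (max ‖a - 1‖ (p : ℝ)⁻¹) ^ n < ((p : ℝ)⁻¹) ^ 2 := by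
    have h2 := (tendsto_pow_atTop_nhds_zero_of_lt_one hr0 hr1).const_mul ‖a - 1‖
    rw [mul_zero] at h2
    exact (h2.eventually_lt_const (by positivity)).exists
  have hdec := pow_p_decay hK (t := a - 1) ha n
  simp only [show (1 : K) + (a - 1) = a from by ring] at hdec
  have hsmall : ‖a ^ p ^ n - 1‖ ≤ ((p : ℝ)⁻¹) ^ 2 := le_trans hdec hn.le
  have hlog : padicLogOnePlus (a ^ p ^ n - 1) = 0 := by
    rw [log_pow hK ha (p ^ n), h0, mul_zero]
  have := log_eq_zero_small hK hsmall hlog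
  exact ⟨n, by rwa [sub_eq_zero] at this⟩

end Main

end S5

/-- Let `p` be a prime and `K` a complete nonarchimedean field extending
`ℚ_p`. Let `u` (an element of `ℤ_p`, viewed in `K`) satisfy `‖u - 1‖ ≤ p⁻¹` and let
`j ∈ ℤ`. For `x ∈ K` with `‖x‖ < 1`, one has `log(1+x) = j·log(u)` (where `log u` means
`log(1 + (u-1))`) if and only if there exist `n ≥ 0` and `ζ ∈ K` with `ζ^{p^n} = 1` and
`1 + x = u^j ζ`: the zeros of `ℓ_j = log(1+x)/log u - j` in the open unit disk are exactly
the points `u^j ζ - 1` with `ζ` a root of unity of `p`-power order. -/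
theorem stmt_5 (p : ℕ) [Fact p.Prime] (K : Type*) [NormedField K] [CompleteSpace K]
    [IsUltrametricDist K] (hK : ∀ q : ℚ, ‖(q : K)‖ = ‖(q : ℚ_[p])‖)
    (u : K) (hu : ‖u - 1‖ ≤ (p : ℝ)⁻¹) (j : ℤ)
    (x : K) (hx : ‖x‖ < 1) :
    padicLogOnePlus x = (j : K) * padicLogOnePlus (u - 1) ↔
      ∃ (n : ℕ) (ζ : K), ζ ^ (p ^ n) = 1 ∧ 1 + x = u ^ j * ζ := by
  have hpp := (Fact.out : p.Prime)
  have hp1 : (1 : ℝ) < p := by exact_mod_cast hpp.one_lt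
  have hpinv1 : (p : ℝ)⁻¹ < 1 := inv_lt_one_of_one_lt₀ hp1
  have hu1 : ‖u - 1‖ < 1 := lt_of_le_of_lt hu hpinv1
  have hune : u ≠ 0 := S5.ne_zero_of_dist_lt hu1
  have hujne : u ^ j ≠ 0 := zpow_ne_zero j hune
  have hx1 : ‖(1 + x) - 1‖ < 1 := by rwa [add_sub_cancel_left]
  have hnormuinv : ∀ i : ℤ, ‖(u ^ i)⁻¹‖ = 1 := by
    intro i
    rw [norm_inv, norm_zpow, S5.norm_eq_one_of_dist_lt hu1, one_zpow, inv_one]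
  have hdisc : ∀ z : K, z = (u ^ j)⁻¹ * ((1 + x) - u ^ j) → ‖z‖ < 1 := by
    intro z hz
    rw [hz, norm_mul, hnormuinv j, one_mul,
      show (1 + x) - u ^ j = x - (u ^ j - 1) from by ring]
    exact lt_of_le_of_lt (S5.norm_sub_le_max' x (u ^ j - 1))
      (max_lt hx (lt_of_le_of_lt (S5.zpow_mem_disc hu1 j) hu1))
  constructor
  · intro h
    set w : K := (1 + x) * u ^ (-j) with hw
    have hwdisc : ‖w - 1‖ < 1 := by
      refine hdisc (w - 1) ?_
      rw [hw, zpow_neg]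
      field_simp
    have hudisc : ‖u ^ (-j) - 1‖ < 1 := lt_of_le_of_lt (S5.zpow_mem_disc hu1 (-j)) hu1
    have hlogw : padicLogOnePlus (w - 1) = 0 := by
      rw [hw, S5.log_mul hK hx1 hudisc, add_sub_cancel_left, h, S5.log_zpow hK hu1 (-j)]
      push_cast
      ring
    obtain ⟨n, hn⟩ := S5.exists_pow_eq_one hK hwdisc hlogw
    refine ⟨n, w, hn, ?_⟩
    rw [hw, zpow_neg]
    field_simp
  · rintro ⟨n, ζ, hζ, hxe⟩
    have hζdisc : ‖ζ - 1‖ < 1 := by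
      refine hdisc (ζ - 1) ?_
      rw [hxe]
      field_simp
    have hζlog : padicLogOnePlus (ζ - 1) = 0 := by
      haveI : CharZero K := S5.charZeroK hK
      have h1 := S5.log_pow hK hζdisc (p ^ n)
      rw [hζ, sub_self, S5.padicLogOnePlus_zero] at h1
      have hpn : ((p ^ n : ℕ) : K) ≠ 0 := Nat.cast_ne_zero.mpr (pow_ne_zero n hpp.ne_zero)
      rcases mul_eq_zero.mp h1.symm with h2 | h2
      · exact absurd h2 hpn
      · exact h2
    have hujdisc : ‖u ^ j - 1‖ < 1 := lt_of_le_of_lt (S5.zpow_mem_disc hu1 j) hu1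
    calc padicLogOnePlus x = padicLogOnePlus (u ^ j * ζ - 1) := by
          rw [show u ^ j * ζ = 1 + x from hxe.symm, add_sub_cancel_left]
      _ = padicLogOnePlus (u ^ j - 1) + padicLogOnePlus (ζ - 1) :=
          S5.log_mul hK hujdisc hζdisc
      _ = (j : K) * padicLogOnePlus (u - 1) := by
          rw [hζlog, add_zero, S5.log_zpow hK hu1 j]
end

section
/- Let p be an odd prime, ζ a primitive p-th root of unity in an algebraic closure of ℚ_p, and 𝒪 = ℤ_p[ζ] the ring of integers of ℚ_p(ζ). For every power series f ∈ ℤ_p[[X]] there exists a unique power series g ∈ ℤ_p[[X]] such that, in 𝒪[[X]], Σ_{i=0}^{p-1} f(ζ^i(1+X) − 1) = p · g((1+X)^p − 1). (Here f(ζ^i(1+X) − 1) denotes the substitution of ζ^i(1+X) − 1 into f, which is well defined since the constant term ζ^i − 1 is topologically nilpotent in 𝒪 and 𝒪[[X]] is complete.) -/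
set_option linter.unusedSectionVars false

open Finset Polynomial

namespace Stmt10Aux



/-- coefficients of `ψ(X^j)` as a polynomial in `y`: `ψ(X^j) = Σ_t (-1)^(j-pt) C(j,pt) (1+y)^t`. -/
def eC (p j m : ℕ) : ℤ :=
  ∑ t ∈ Finset.range (j / p + 1), (-1) ^ (j - p * t) * (j.choose (p * t) : ℤ) * (t.choose m : ℤ)

/-- `[X^m] ((1+X)^p - 1)^k` over `ℤ`. -/
noncomputable def cC (p m k : ℕ) : ℤ := ((((1 + Polynomial.X : Polynomial ℤ)) ^ p - 1) ^ k).coeff m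

lemma omega_coeff_zero (p : ℕ) : ((1 + Polynomial.X : Polynomial ℤ) ^ p - 1).coeff 0 = 0 := by
  simp [coeff_one, coeff_one_add_X_pow]

lemma omega_eq (p : ℕ) :
    (1 + Polynomial.X : Polynomial ℤ) ^ p - 1
      = Polynomial.X * ((1 + Polynomial.X : Polynomial ℤ) ^ p - 1).divX := by
  conv_lhs => rw [← Polynomial.X_mul_divX_add ((1 + Polynomial.X : Polynomial ℤ) ^ p - 1)]
  rw [omega_coeff_zero, Polynomial.C_0, add_zero]

lemma cC_eq_zero {p m k : ℕ} (h : m < k) : cC p m k = 0 := by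
  rw [cC, omega_eq p, mul_pow, mul_comm, Polynomial.coeff_mul_X_pow']
  simp [Nat.not_le.mpr h]

lemma cC_diag (p m : ℕ) : cC p m m = (p : ℤ) ^ m := by
  rw [cC, omega_eq p, mul_pow, mul_comm, Polynomial.coeff_mul_X_pow']
  have h0 : (((1 + Polynomial.X : Polynomial ℤ) ^ p - 1).divX).coeff 0 = (p : ℤ) := by
    have := Polynomial.coeff_X_mul (((1 + Polynomial.X : Polynomial ℤ) ^ p - 1).divX) 0
    rw [← omega_eq p] at this
    rw [← this]
    simp [coeff_one, coeff_one_add_X_pow]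
  simp only [le_refl, if_true, Nat.sub_self]
  rw [Polynomial.coeff_zero_eq_eval_zero, Polynomial.eval_pow, ← Polynomial.coeff_zero_eq_eval_zero, h0]

lemma L1a (p t m : ℕ) :
    ∑ k ∈ range (m+1), (t.choose k : ℤ) * cC p m k = ((p*t).choose m : ℤ) := by
  have key : ((1 + Polynomial.X : Polynomial ℤ) ^ (p*t)).coeff m
      = ∑ k ∈ range (t+1), (t.choose k : ℤ) * cC p m k := by
    rw [pow_mul, show ((1 + Polynomial.X : Polynomial ℤ)^p)^t
        = (((1 + Polynomial.X : Polynomial ℤ)^p - 1) + 1)^t by ring, add_pow]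
    rw [Polynomial.finset_sum_coeff]
    refine Finset.sum_congr rfl fun k _ => ?_
    rw [one_pow, mul_one, ← Polynomial.C_eq_natCast, Polynomial.coeff_mul_C, cC, mul_comm]
  rw [coeff_one_add_X_pow] at key
  rw [key]
  rcases le_total t m with h | h
  · symm
    apply Finset.sum_subset (Finset.range_subset_range.mpr (by omega))
    intro k _ hk
    have : t < k := by simp only [Finset.mem_range] at *; omega
    simp [Nat.choose_eq_zero_of_lt this]
  · apply Finset.sum_subset (Finset.range_subset_range.mpr (by omega))
    intro k _ hk
    have : m < k := by simp only [Finset.mem_range] at *; omega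
    simp [cC_eq_zero this]

lemma L1 (p j m : ℕ) :
    ∑ k ∈ range (m+1), eC p j k * cC p m k
      = ∑ t ∈ range (j/p + 1), (-1)^(j - p*t) * (j.choose (p*t) : ℤ) * ((p*t).choose m : ℤ) := by
  simp only [eC, Finset.sum_mul]
  rw [Finset.sum_comm]
  refine Finset.sum_congr rfl fun t _ => ?_
  rw [← L1a p t m, Finset.mul_sum]
  refine Finset.sum_congr rfl fun k _ => ?_
  ring

variable {K : Type*} [CommRing K] [IsDomain K] {p : ℕ} {ζ : K}

lemma roots_sum (hp : p.Prime) (hζ : IsPrimitiveRoot ζ p) (n : ℕ) :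
    ∑ i ∈ range p, ζ ^ (i * n) = if p ∣ n then (p : K) else 0 := by
  have hpow : ∀ i, ζ ^ (i * n) = (ζ ^ n) ^ i := fun i => by rw [mul_comm, pow_mul]
  simp only [hpow]
  split_ifs with h
  · have h1 : ζ ^ n = 1 := (hζ.pow_eq_one_iff_dvd n).mpr h
    simp [h1]
  · have hco : n.Coprime p := (Nat.coprime_comm).mp (hp.coprime_iff_not_dvd.mpr h)
    have hprim : IsPrimitiveRoot (ζ ^ n) p := hζ.pow_of_coprime n hco
    exact hprim.geom_sum_eq_zero hp.one_lt

lemma keyIdentity (hp : p.Prime) (hζ : IsPrimitiveRoot ζ p) (j m : ℕ) :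
    ∑ i ∈ range p, (j.choose m : K) * ζ ^ (i * m) * (ζ ^ i - 1) ^ (j - m)
      = (p : K) * ∑ t ∈ range (j / p + 1),
          (-1 : K) ^ (j - p * t) * (j.choose (p * t) : K) * ((p * t).choose m : K) := by
  by_cases hmj : m ≤ j
  · -- expand (ζ^i - 1)^(j-m)
    have expand : ∀ i, (j.choose m : K) * ζ ^ (i * m) * (ζ ^ i - 1) ^ (j - m)
        = ∑ s ∈ range ((j - m) + 1),
            ((j.choose m : K) * ((j - m).choose s : K) * (-1 : K) ^ (s + (j - m)))
              * ζ ^ (i * (m + s)) := by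
      intro i
      rw [sub_pow, Finset.mul_sum]
      refine Finset.sum_congr rfl fun s hs => ?_
      have : (ζ ^ i) ^ s = ζ ^ (i * s) := by rw [← pow_mul]
      rw [this, one_pow]
      have hz : ζ ^ (i * (m + s)) = ζ ^ (i * m) * ζ ^ (i * s) := by
        rw [← pow_add, Nat.mul_add]
      rw [hz]; ring
    simp only [expand]
    rw [Finset.sum_comm]
    have inner : ∀ s ∈ range ((j - m) + 1),
        ∑ i ∈ range p, ((j.choose m : K) * ((j - m).choose s : K) * (-1 : K) ^ (s + (j - m)))
            * ζ ^ (i * (m + s))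
        = ((j.choose m : K) * ((j - m).choose s : K) * (-1 : K) ^ (s + (j - m)))
            * (if p ∣ (m + s) then (p : K) else 0) := by
      intro s _
      rw [← Finset.mul_sum, roots_sum hp hζ]
    rw [Finset.sum_congr rfl inner]
    -- convert to sums over filters
    rw [Finset.mul_sum]
    have lhs_filter :
        ∑ s ∈ range ((j - m) + 1),
          ((j.choose m : K) * ((j - m).choose s : K) * (-1 : K) ^ (s + (j - m)))
            * (if p ∣ (m + s) then (p : K) else 0)
        = ∑ s ∈ (range ((j - m) + 1)).filter (fun s => p ∣ (m + s)),
            ((j.choose m : K) * ((j - m).choose s : K) * (-1 : K) ^ (s + (j - m))) * (p : K) := by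
      rw [Finset.sum_filter]
      refine Finset.sum_congr rfl fun s _ => ?_
      split_ifs with h <;> simp
    rw [lhs_filter]
    have rhs_filter :
        ∑ t ∈ range (j / p + 1),
          (p : K) * ((-1 : K) ^ (j - p * t) * (j.choose (p * t) : K) * ((p * t).choose m : K))
        = ∑ t ∈ (range (j / p + 1)).filter (fun t => m ≤ p * t),
            (p : K) * ((-1 : K) ^ (j - p * t) * (j.choose (p * t) : K) * ((p * t).choose m : K)) := by
      symm
      apply Finset.sum_filter_of_ne
      intro t _ hne
      by_contra hlt
      push_neg at hlt
      rw [Nat.choose_eq_zero_of_lt hlt] at hne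
      simp at hne
    rw [rhs_filter]
    -- bijection s ↦ (m+s)/p
    refine Finset.sum_nbij' (fun s => (m + s) / p) (fun t => p * t - m) ?_ ?_ ?_ ?_ ?_
    · intro s hs
      simp only [Finset.mem_filter, Finset.mem_range] at hs ⊢
      obtain ⟨hs1, hs2⟩ := hs
      have hple : p * ((m + s) / p) = m + s := Nat.mul_div_cancel' hs2
      constructor
      · have : (m + s) / p ≤ j / p := Nat.div_le_div_right (by omega)
        omega
      · omega
    · intro t ht
      simp only [Finset.mem_filter, Finset.mem_range] at ht ⊢
      obtain ⟨ht1, ht2⟩ := ht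
      have hptj : p * t ≤ j := by
        calc p * t ≤ p * (j / p) := Nat.mul_le_mul_left p (by omega)
        _ ≤ j := by rw [mul_comm]; exact Nat.div_mul_le_self j p
      constructor
      · omega
      · have : m + (p * t - m) = p * t := by omega
        rw [this]
        exact Dvd.intro t rfl
    · intro s hs
      simp only [Finset.mem_filter, Finset.mem_range] at hs
      obtain ⟨hs1, hs2⟩ := hs
      have hple : p * ((m + s) / p) = m + s := Nat.mul_div_cancel' hs2
      show p * ((m + s) / p) - m = s
      omega
    · intro t ht
      simp only [Finset.mem_filter, Finset.mem_range] at ht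
      obtain ⟨ht1, ht2⟩ := ht
      have h3 : m + (p * t - m) = p * t := by omega
      show (m + (p * t - m)) / p = t
      rw [h3, Nat.mul_div_cancel_left t hp.pos]
    · intro s hs
      simp only [Finset.mem_filter, Finset.mem_range] at hs
      obtain ⟨hs1, hs2⟩ := hs
      have hple : p * ((m + s) / p) = m + s := Nat.mul_div_cancel' hs2
      rw [hple]
      have hsign : (-1 : K) ^ (s + (j - m)) = (-1 : K) ^ (j - (m + s)) := by
        rw [show s + (j - m) = (j - (m + s)) + 2 * s by omega, pow_add, pow_mul]
        simp
      have hbinom : (j.choose (m + s)) * ((m + s).choose m) = j.choose m * ((j - m).choose s) := by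
        have := Nat.choose_mul (n := j) (k := m + s) (s := m) (show m ≤ m + s by omega)
        simpa using this
      have hbinomK : ((j.choose (m + s)) : K) * (((m + s).choose m) : K)
          = (j.choose m : K) * (((j - m).choose s) : K) := by
        exact_mod_cast congrArg (Nat.cast : ℕ → K) hbinom
      rw [hsign]
      calc (j.choose m : K) * (((j - m).choose s) : K) * (-1 : K) ^ (j - (m + s)) * (p : K)
          = (-1 : K) ^ (j - (m + s)) * ((j.choose m : K) * (((j - m).choose s) : K)) * (p : K) := by ring
        _ = (-1 : K) ^ (j - (m + s)) * ((j.choose (m + s) : K) * (((m + s).choose m) : K)) * (p : K) := by rw [hbinomK]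
        _ = (p : K) * ((-1 : K) ^ (j - (m + s)) * (j.choose (m + s) : K) * (((m + s).choose m) : K)) := by ring
  · push_neg at hmj
    have h1 : j.choose m = 0 := Nat.choose_eq_zero_of_lt hmj
    have h2 : ∀ t ∈ range (j / p + 1), (p * t).choose m = 0 := by
      intro t ht
      simp only [Finset.mem_range] at ht
      apply Nat.choose_eq_zero_of_lt
      calc p * t ≤ p * (j / p) := Nat.mul_le_mul_left p (by omega)
        _ ≤ j := by rw [mul_comm]; exact Nat.div_mul_le_self j p
        _ < m := hmj
    have hR : ∑ t ∈ range (j / p + 1),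
        (-1 : K) ^ (j - p * t) * (j.choose (p * t) : K) * ((p * t).choose m : K) = 0 :=
      Finset.sum_eq_zero fun t ht => by rw [h2 t ht]; simp
    rw [hR, mul_zero, h1]
    simp


variable {p : ℕ} [hpf : Fact p.Prime] {K : Type*} [NormedField K] [IsUltrametricDist K]
  [Algebra ℚ_[p] K] {ζ : K}

lemma normK_int (hK : ∀ q : ℚ_[p], ‖algebraMap ℚ_[p] K q‖ = ‖q‖) (n : ℤ) : ‖(n : K)‖ ≤ 1 := by
  rw [← map_intCast (algebraMap ℚ_[p] K), hK]
  exact Padic.norm_int_le_one n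

lemma normK_nat (hK : ∀ q : ℚ_[p], ‖algebraMap ℚ_[p] K q‖ = ‖q‖) (n : ℕ) : ‖(n : K)‖ ≤ 1 := by
  simpa using normK_int hK (n : ℤ)

lemma normK_p (hK : ∀ q : ℚ_[p], ‖algebraMap ℚ_[p] K q‖ = ‖q‖) :
    ‖(p : K)‖ = (p : ℝ)⁻¹ := by
  rw [← map_natCast (algebraMap ℚ_[p] K), hK]
  exact Padic.norm_p

lemma pK_ne_zero (hK : ∀ q : ℚ_[p], ‖algebraMap ℚ_[p] K q‖ = ‖q‖) :
    (p : K) ≠ 0 := by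
  intro h
  have := normK_p (K := K) hK
  rw [h, norm_zero] at this
  have hp2 : (2:ℝ) ≤ (p:ℝ) := by exact_mod_cast hpf.out.two_le
  have hpos : (0:ℝ) < (p:ℝ)⁻¹ := by positivity
  rw [← this] at hpos
  exact lt_irrefl _ hpos

lemma norm_zeta (hp : 0 < p) (hζ : IsPrimitiveRoot ζ p) : ‖ζ‖ = 1 := by
  have h1 : ζ ^ p = 1 := hζ.pow_eq_one
  have h2 : ‖ζ‖ ^ p = 1 := by rw [← norm_pow, h1, norm_one]
  exact (pow_eq_one_iff_of_nonneg (norm_nonneg ζ) hp.ne').mp h2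

lemma aux_pow_sub_one {x : K} (hx : ‖x‖ = 1) (b : ℕ) : ‖x ^ b - 1‖ ≤ ‖x - 1‖ := by
  have h := geom_sum_mul x b
  calc ‖x ^ b - 1‖ = ‖∑ i ∈ range b, x ^ i‖ * ‖x - 1‖ := by rw [← h, norm_mul]
    _ ≤ 1 * ‖x - 1‖ := by
        apply mul_le_mul_of_nonneg_right _ (norm_nonneg _)
        apply IsUltrametricDist.norm_sum_le_of_forall_le_of_nonneg zero_le_one
        intro i _
        rw [norm_pow, hx, one_pow]
    _ = ‖x - 1‖ := one_mul _

lemma zeta_pow_sub_one_le (hp : 0 < p) (hζ : IsPrimitiveRoot ζ p) (i : ℕ) :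
    ‖ζ ^ i - 1‖ ≤ ‖ζ - 1‖ :=
  aux_pow_sub_one (norm_zeta hp hζ) i

lemma le_zeta_pow_sub_one (hζ : IsPrimitiveRoot ζ p) {i : ℕ} (hi : ¬ p ∣ i) :
    ‖ζ - 1‖ ≤ ‖ζ ^ i - 1‖ := by
  have hco : i.Coprime p := (Nat.coprime_comm).mp (hpf.out.coprime_iff_not_dvd.mpr hi)
  have hprim : IsPrimitiveRoot (ζ ^ i) p := hζ.pow_of_coprime i hco
  obtain ⟨b, _, hb⟩ := hprim.eq_pow_of_pow_eq_one hζ.pow_eq_one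
  calc ‖ζ - 1‖ = ‖(ζ ^ i) ^ b - 1‖ := by rw [hb]
    _ ≤ ‖ζ ^ i - 1‖ := aux_pow_sub_one (norm_zeta hpf.out.pos hprim) b

lemma r_pos (hζ : IsPrimitiveRoot ζ p) : 0 < ‖ζ - 1‖ := by
  rw [norm_pos_iff, sub_ne_zero]
  exact hζ.ne_one hpf.out.one_lt

lemma r_pow_le (hK : ∀ q : ℚ_[p], ‖algebraMap ℚ_[p] K q‖ = ‖q‖)
    (hζ : IsPrimitiveRoot ζ p) : ‖ζ - 1‖ ^ (p - 1) ≤ (p : ℝ)⁻¹ := by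
  have hp1 : p - 1 + 1 = p := Nat.succ_pred_eq_of_pos hpf.out.pos
  have hμ : IsPrimitiveRoot ζ ((p - 1) + 1) := by rwa [hp1]
  have hq := hμ.prod_one_sub_pow_eq_order
  have hnorm : ∏ k ∈ range (p - 1), ‖1 - ζ ^ (k + 1)‖ = (p : ℝ)⁻¹ := by
    rw [← norm_prod, hq, show ((p - 1 : ℕ) : K) + 1 = (p : K) by exact_mod_cast congrArg (Nat.cast : ℕ → K) hp1]
    exact normK_p hK
  calc ‖ζ - 1‖ ^ (p - 1) = ∏ _k ∈ range (p - 1), ‖ζ - 1‖ := by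
        rw [Finset.prod_const, Finset.card_range]
    _ ≤ ∏ k ∈ range (p - 1), ‖1 - ζ ^ (k + 1)‖ := by
        apply Finset.prod_le_prod (fun _ _ => norm_nonneg _)
        intro k hk
        rw [norm_sub_rev (1:K) (ζ^(k+1))]
        apply le_zeta_pow_sub_one hζ
        intro hdvd
        have := Nat.le_of_dvd (Nat.succ_pos k) hdvd
        simp only [Finset.mem_range] at hk
        omega
    _ = (p : ℝ)⁻¹ := hnorm

lemma r_lt_one (hK : ∀ q : ℚ_[p], ‖algebraMap ℚ_[p] K q‖ = ‖q‖)
    (hζ : IsPrimitiveRoot ζ p) : ‖ζ - 1‖ < 1 := by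
  by_contra h
  push_neg at h
  have h1 : (1:ℝ) ≤ ‖ζ - 1‖ ^ (p - 1) := one_le_pow₀ h
  have h2 := r_pow_le hK hζ
  have hp2 : (2:ℝ) ≤ (p:ℝ) := by exact_mod_cast hpf.out.two_le
  have : (p:ℝ)⁻¹ < 1 := by
    rw [inv_lt_one_iff₀]; right; linarith
  linarith


lemma normK_nat2 (hK : ∀ q : ℚ_[p], ‖algebraMap ℚ_[p] K q‖ = ‖q‖) (n : ℕ) : ‖(n : K)‖ ≤ 1 := by
  simpa using normK_int hK (n : ℤ)

lemma keyIdentityC (hζ : IsPrimitiveRoot ζ p) (j m : ℕ) :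
    ∑ i ∈ range p, (j.choose m : K) * ζ ^ (i * m) * (ζ ^ i - 1) ^ (j - m)
      = (p : K) * ∑ k ∈ range (m + 1), ((eC p j k : ℤ) : K) * ((cC p m k : ℤ) : K) := by
  rw [keyIdentity hpf.out hζ j m]
  congr 1
  have h := congrArg (fun z : ℤ => (z : K)) (L1 p j m)
  push_cast at h
  exact h.symm

lemma eC_bound_step (hK : ∀ q : ℚ_[p], ‖algebraMap ℚ_[p] K q‖ = ‖q‖)
    (hζ : IsPrimitiveRoot ζ p) (m : ℕ) (C : ℝ) (hC : 0 < C)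
    (ih : ∀ k < m, ∀ j, ‖((eC p j k : ℤ) : K)‖ ≤ C * ‖ζ - 1‖ ^ j) :
    ∃ C', 0 < C' ∧ ∀ k ≤ m, ∀ j, ‖((eC p j k : ℤ) : K)‖ ≤ C' * ‖ζ - 1‖ ^ j := by
  set r := ‖ζ - 1‖ with hr
  have hr0 : 0 < r := r_pos hζ
  have hr1 : r < 1 := r_lt_one hK hζ
  have hp0 : (0:ℝ) < (p:ℝ) := by exact_mod_cast hpf.out.pos
  set M := max C (r⁻¹ ^ m) with hM
  have hM0 : 0 < M := lt_of_lt_of_le hC (le_max_left _ _)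
  have hCM : C ≤ M := le_max_left _ _
  have hrM : r⁻¹ ^ m ≤ M := le_max_right _ _
  have hplarge : (1:ℝ) ≤ (p:ℝ) ^ (m + 1) := one_le_pow₀ (by exact_mod_cast hpf.out.pos)
  refine ⟨(p:ℝ) ^ (m+1) * M, by positivity, ?_⟩
  intro k hk j
  have hrj : (0:ℝ) ≤ r ^ j := by positivity
  rcases Nat.lt_or_ge k m with hklt | hge
  · calc ‖((eC p j k : ℤ) : K)‖ ≤ C * r ^ j := ih k hklt j
      _ ≤ (p:ℝ) ^ (m+1) * M * r ^ j := by
          apply mul_le_mul_of_nonneg_right _ hrj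
          calc C ≤ M := hCM
            _ ≤ (p:ℝ) ^ (m+1) * M := le_mul_of_one_le_left hM0.le hplarge
  · have hkm : k = m := le_antisymm hk hge
    subst hkm
    by_cases hjm : j ≤ k
    · -- small j
      have h1 : ‖((eC p j k : ℤ) : K)‖ ≤ 1 := normK_int hK _
      have hpow : r ^ k ≤ r ^ j := pow_le_pow_of_le_one hr0.le hr1.le hjm
      have h2 : (1:ℝ) ≤ r⁻¹ ^ k * r ^ j := by
        rw [inv_pow, ← div_eq_inv_mul, le_div_iff₀ (by positivity), one_mul]
        exact hpow
      calc ‖((eC p j k : ℤ) : K)‖ ≤ 1 := h1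
        _ ≤ r⁻¹ ^ k * r ^ j := h2
        _ ≤ M * r ^ j := mul_le_mul_of_nonneg_right hrM hrj
        _ ≤ (p:ℝ) ^ (k+1) * M * r ^ j :=
            mul_le_mul_of_nonneg_right (le_mul_of_one_le_left hM0.le hplarge) hrj
    · push_neg at hjm
      have hI := keyIdentityC hζ j k
      rw [Finset.sum_range_succ] at hI
      have hcmm : ((cC p k k : ℤ) : K) = (p:K) ^ k := by rw [cC_diag]; push_cast; ring
      rw [hcmm] at hI
      set D := ∑ i ∈ range p, (j.choose k : K) * ζ ^ (i * k) * (ζ ^ i - 1) ^ (j - k) with hD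
      set S := ∑ k' ∈ range k, ((eC p j k' : ℤ) : K) * ((cC p k k' : ℤ) : K) with hS
      have hsolve : ((eC p j k : ℤ) : K) * (p:K) ^ (k+1) = D - (p:K) * S := by
        rw [pow_succ]
        linear_combination -hI
      have hnorm_eq : ‖((eC p j k : ℤ) : K)‖ * ((p:ℝ)⁻¹) ^ (k+1) = ‖D - (p:K) * S‖ := by
        rw [← normK_p hK, ← norm_pow, ← norm_mul, hsolve]
      have hDle : ‖D‖ ≤ r⁻¹ ^ k * r ^ j := by
        have hbound : ∀ i ∈ range p,
            ‖(j.choose k : K) * ζ ^ (i * k) * (ζ ^ i - 1) ^ (j - k)‖ ≤ r⁻¹ ^ k * r ^ j := by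
          intro i _
          have e1 : ‖(j.choose k : K)‖ ≤ 1 := normK_nat2 hK _
          have e2 : ‖ζ ^ (i * k)‖ = 1 := by
            rw [norm_pow, norm_zeta hpf.out.pos hζ, one_pow]
          have e3 : ‖(ζ ^ i - 1) ^ (j - k)‖ ≤ r ^ (j - k) := by
            rw [norm_pow]
            exact pow_le_pow_left₀ (norm_nonneg _) (zeta_pow_sub_one_le hpf.out.pos hζ i) _
          have e4 : r ^ (j - k) = r⁻¹ ^ k * r ^ j := by
            rw [inv_pow, ← div_eq_inv_mul, eq_div_iff (by positivity), ← pow_add]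
            congr 1
            omega
          calc ‖(j.choose k : K) * ζ ^ (i * k) * (ζ ^ i - 1) ^ (j - k)‖
              = ‖(j.choose k : K)‖ * 1 * ‖(ζ ^ i - 1) ^ (j - k)‖ := by
                rw [norm_mul, norm_mul, e2]
            _ ≤ 1 * 1 * r ^ (j - k) := by
                apply mul_le_mul (by simpa using e1) e3 (norm_nonneg _) (by norm_num)
            _ = r ^ (j - k) := by ring
            _ = r⁻¹ ^ k * r ^ j := e4
        exact IsUltrametricDist.norm_sum_le_of_forall_le_of_nonneg (by positivity) hbound
      have hSle : ‖(p:K) * S‖ ≤ C * r ^ j := by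
        rw [norm_mul]
        have h1 : ‖S‖ ≤ C * r ^ j := by
          apply IsUltrametricDist.norm_sum_le_of_forall_le_of_nonneg (by positivity)
          intro k' hk'
          simp only [Finset.mem_range] at hk'
          calc ‖((eC p j k' : ℤ) : K) * ((cC p k k' : ℤ) : K)‖
              = ‖((eC p j k' : ℤ) : K)‖ * ‖((cC p k k' : ℤ) : K)‖ := norm_mul _ _
            _ ≤ (C * r ^ j) * 1 :=
                mul_le_mul (ih k' hk' j) (normK_int hK _) (norm_nonneg _) (by positivity)
            _ = C * r ^ j := mul_one _
        calc ‖(p:K)‖ * ‖S‖ ≤ 1 * (C * r ^ j) :=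
              mul_le_mul (normK_nat2 hK p) h1 (norm_nonneg _) zero_le_one
          _ = C * r ^ j := one_mul _
      have hmax : ‖D - (p:K) * S‖ ≤ M * r ^ j := by
        have h1 : ‖D - (p:K) * S‖ ≤ max ‖D‖ ‖(p:K) * S‖ := by
          rw [sub_eq_add_neg]
          refine (IsUltrametricDist.norm_add_le_max _ _).trans ?_
          rw [norm_neg]
        apply h1.trans
        apply max_le
        · exact hDle.trans (mul_le_mul_of_nonneg_right hrM hrj)
        · exact hSle.trans (mul_le_mul_of_nonneg_right hCM hrj)
      have hfinal : ‖((eC p j k : ℤ) : K)‖ = ‖D - (p:K) * S‖ * (p:ℝ) ^ (k+1) := by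
        have hne : ((p:ℝ)⁻¹) ^ (k+1) ≠ 0 := by positivity
        rw [← hnorm_eq, mul_assoc, ← mul_pow, inv_mul_cancel₀ hp0.ne', one_pow, mul_one]
      rw [hfinal]
      calc ‖D - (p:K) * S‖ * (p:ℝ) ^ (k+1) ≤ (M * r ^ j) * (p:ℝ) ^ (k+1) :=
            mul_le_mul_of_nonneg_right hmax (by positivity)
        _ = (p:ℝ) ^ (k+1) * M * r ^ j := by ring

lemma eC_bound (hK : ∀ q : ℚ_[p], ‖algebraMap ℚ_[p] K q‖ = ‖q‖)
    (hζ : IsPrimitiveRoot ζ p) (m : ℕ) :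
    ∃ C, 0 < C ∧ ∀ k ≤ m, ∀ j, ‖((eC p j k : ℤ) : K)‖ ≤ C * ‖ζ - 1‖ ^ j := by
  induction m with
  | zero => exact eC_bound_step hK hζ 0 1 one_pos (fun k hk => absurd hk (Nat.not_lt_zero k))
  | succ m ih =>
    obtain ⟨C, hC, h⟩ := ih
    exact eC_bound_step hK hζ (m+1) C hC (fun k hk j => h k (Nat.lt_succ_iff.mp hk) j)

end Stmt10Aux

open Stmt10Aux Finset Filter in
/-- Let `p` be an odd prime, `ζ` a primitive `p`-th root of unity in an
algebraic closure of `ℚ_p` (formalized: in a complete nonarchimedean normed field `K`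
whose norm extends that of `ℚ_p`), and `𝒪 = ℤ_p[ζ]`. For every `f ∈ ℤ_p[[X]]` there is a
unique `g ∈ ℤ_p[[X]]` such that `Σ_{i=0}^{p-1} f(ζ^i(1+X) - 1) = p · g((1+X)^p - 1)`.
Since `ζ^i(1+X) - 1 = (ζ^i - 1) + ζ^i X` with `ζ^i - 1` topologically nilpotent, the
coefficient of `X^m` in `f(ζ^i(1+X) - 1)` is the convergent series
`Σ_k f_k · C(k,m) · ζ^{im} (ζ^i - 1)^{k-m}`, and the identity is stated coefficientwise;
the coefficient of `X^m` in `g((1+X)^p - 1)` is the finite sum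
`Σ_{k ≤ m} g_k · [X^m](((1+X)^p - 1)^k)`. -/
theorem stmt_10 (p : ℕ) [Fact p.Prime] (hodd : Odd p)
    (K : Type*) [NormedField K] [CompleteSpace K] [IsUltrametricDist K]
    [Algebra ℚ_[p] K] (hK : ∀ q : ℚ_[p], ‖algebraMap ℚ_[p] K q‖ = ‖q‖)
    (ζ : K) (hζ : IsPrimitiveRoot ζ p)
    (f : PowerSeries ℤ_[p]) :
    ∃! g : PowerSeries ℤ_[p], ∀ m : ℕ,
      (∑ i ∈ Finset.range p, ∑' k : ℕ,
          algebraMap ℚ_[p] K ((PowerSeries.coeff k f : ℤ_[p]) : ℚ_[p]) *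
            (k.choose m : K) * ζ ^ (i * m) * (ζ ^ i - 1) ^ (k - m))
        = (p : K) * ∑ k ∈ Finset.range (m + 1),
            algebraMap ℚ_[p] K ((PowerSeries.coeff k g : ℤ_[p]) : ℚ_[p]) *
              (((((1 + Polynomial.X : Polynomial ℤ) ^ p - 1) ^ k).coeff m : ℤ) : K) := by
  classical
  have hp : p.Prime := Fact.out
  set r := ‖ζ - 1‖ with hrdef
  have hr0 : 0 < r := r_pos hζ
  have hr1 : r < 1 := r_lt_one hK hζ
  set ι : ℤ_[p] →+* K := (algebraMap ℚ_[p] K).comp (PadicInt.Coe.ringHom) with hιdef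
  have hι_def : ∀ x : ℤ_[p], ι x = algebraMap ℚ_[p] K (x : ℚ_[p]) := fun _ => rfl
  have hι_norm : ∀ x : ℤ_[p], ‖ι x‖ = ‖x‖ := fun x => by
    rw [hι_def, hK]; exact (PadicInt.norm_def).symm
  have hι_isom : Isometry ι := AddMonoidHomClass.isometry_of_norm ι hι_norm
  have hι_cont : Continuous ι := hι_isom.continuous
  have hι_inj : Function.Injective ι := hι_isom.injective
  have hι_int : ∀ n : ℤ, ι (n : ℤ_[p]) = (n : K) := fun n => map_intCast ι n
  -- summability in ℤ_[p]
  have hsum_Zp : ∀ m : ℕ, Summable fun j =>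
      (PowerSeries.coeff j f) * ((eC p j m : ℤ) : ℤ_[p]) := by
    intro m
    obtain ⟨C, hC, hbd⟩ := eC_bound (K := K) hK hζ m
    apply NonarchimedeanAddGroup.summable_of_tendsto_cofinite_zero
    rw [Nat.cofinite_eq_atTop]
    apply squeeze_zero_norm (a := fun j => C * r ^ j)
    · intro j
      calc ‖(PowerSeries.coeff j f) * ((eC p j m : ℤ) : ℤ_[p])‖
          ≤ ‖PowerSeries.coeff j f‖ * ‖((eC p j m : ℤ) : ℤ_[p])‖ := norm_mul_le _ _
        _ ≤ 1 * (C * r ^ j) := by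
            apply mul_le_mul (PadicInt.norm_le_one _) ?_ (norm_nonneg _) zero_le_one
            rw [← hι_norm, hι_int]
            exact hbd m le_rfl j
        _ = C * r ^ j := one_mul _
    · simpa using (tendsto_pow_atTop_nhds_zero_of_lt_one hr0.le hr1).const_mul C
  set g : PowerSeries ℤ_[p] := PowerSeries.mk
    (fun k => ∑' j, (PowerSeries.coeff j f) * ((eC p j k : ℤ) : ℤ_[p])) with hg
  -- summability in K
  have hterm_le : ∀ i k m : ℕ,
      ‖ι (PowerSeries.coeff k f) * (k.choose m : K) * ζ ^ (i * m) *
        (ζ ^ i - 1) ^ (k - m)‖ ≤ r ^ (k - m) := by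
    intro i k m
    have h1 : ‖ι (PowerSeries.coeff k f)‖ ≤ 1 := by
      rw [hι_norm]; exact PadicInt.norm_le_one _
    have h2 : ‖(k.choose m : K)‖ ≤ 1 := normK_nat2 hK _
    have h3 : ‖ζ ^ (i * m)‖ = 1 := by rw [norm_pow, norm_zeta hp.pos hζ, one_pow]
    have h4 : ‖(ζ ^ i - 1) ^ (k - m)‖ ≤ r ^ (k - m) := by
      rw [norm_pow]
      exact pow_le_pow_left₀ (norm_nonneg _) (zeta_pow_sub_one_le hp.pos hζ i) _
    calc ‖ι (PowerSeries.coeff k f) * (k.choose m : K) * ζ ^ (i * m) *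
          (ζ ^ i - 1) ^ (k - m)‖
        = ‖ι (PowerSeries.coeff k f)‖ * ‖(k.choose m : K)‖ * ‖ζ ^ (i * m)‖ *
          ‖(ζ ^ i - 1) ^ (k - m)‖ := by rw [norm_mul, norm_mul, norm_mul]
      _ ≤ 1 * 1 * 1 * r ^ (k - m) :=
          mul_le_mul (mul_le_mul (mul_le_mul h1 h2 (norm_nonneg _) zero_le_one)
            (le_of_eq h3) (norm_nonneg _) (by norm_num)) h4 (norm_nonneg _) (by norm_num)
      _ = r ^ (k - m) := by ring
  have hsum_K : ∀ m i : ℕ, Summable fun k =>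
      ι (PowerSeries.coeff k f) * (k.choose m : K) * ζ ^ (i * m) *
        (ζ ^ i - 1) ^ (k - m) := by
    intro m i
    apply NonarchimedeanAddGroup.summable_of_tendsto_cofinite_zero
    rw [Nat.cofinite_eq_atTop]
    apply squeeze_zero_norm (fun k => hterm_le i k m)
    have h0 : Tendsto (fun n : ℕ => r ^ n) atTop (nhds 0) :=
      tendsto_pow_atTop_nhds_zero_of_lt_one hr0.le hr1
    exact h0.comp (tendsto_sub_atTop_nat m)
  have hsumEK : ∀ k' : ℕ, Summable fun k =>
      ι (PowerSeries.coeff k f) * ((eC p k k' : ℤ) : K) := by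
    intro k'
    have h := (hsum_Zp k').map ι hι_cont
    refine h.congr fun k => ?_
    simp [Function.comp, map_mul, hι_int]
  have hmapt : ∀ k' : ℕ,
      ι (∑' j, (PowerSeries.coeff j f) * ((eC p j k' : ℤ) : ℤ_[p]))
        = ∑' j, ι (PowerSeries.coeff j f) * ((eC p j k' : ℤ) : K) := by
    intro k'
    have h := ((hsum_Zp k').hasSum.map ι hι_cont).tsum_eq
    rw [← h]
    exact tsum_congr fun j => by simp [Function.comp, map_mul, hι_int]
  have hmain : ∀ m : ℕ,
      (∑ i ∈ Finset.range p, ∑' k : ℕ,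
          ι (PowerSeries.coeff k f) * (k.choose m : K) * ζ ^ (i * m) *
            (ζ ^ i - 1) ^ (k - m))
        = (p : K) * ∑ k ∈ Finset.range (m + 1),
            ι (PowerSeries.coeff k g) * ((cC p m k : ℤ) : K) := by
    intro m
    rw [← Summable.tsum_finsetSum (fun i _ => hsum_K m i)]
    have step2 : ∀ k : ℕ,
        (∑ i ∈ Finset.range p, ι (PowerSeries.coeff k f) * (k.choose m : K) *
            ζ ^ (i * m) * (ζ ^ i - 1) ^ (k - m))
          = ∑ k' ∈ Finset.range (m + 1), ((p : K) * ((cC p m k' : ℤ) : K)) *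
              (ι (PowerSeries.coeff k f) * ((eC p k k' : ℤ) : K)) := by
      intro k
      have e1 : (∑ i ∈ Finset.range p, ι (PowerSeries.coeff k f) * (k.choose m : K) *
            ζ ^ (i * m) * (ζ ^ i - 1) ^ (k - m))
          = ι (PowerSeries.coeff k f) *
              ∑ i ∈ Finset.range p, (k.choose m : K) * ζ ^ (i * m) * (ζ ^ i - 1) ^ (k - m) := by
        rw [Finset.mul_sum]
        exact Finset.sum_congr rfl fun i _ => by ring
      rw [e1, keyIdentityC hζ k m, Finset.mul_sum, Finset.mul_sum]
      exact Finset.sum_congr rfl fun k' _ => by ring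
    rw [tsum_congr step2, Summable.tsum_finsetSum (fun k' _ => (hsumEK k').mul_left _), Finset.mul_sum]
    refine Finset.sum_congr rfl fun k' _ => ?_
    rw [tsum_mul_left, hg, PowerSeries.coeff_mk, hmapt k']
    ring
  refine ⟨g, fun m => hmain m, ?_⟩
  -- uniqueness
  intro g' hg'
  have hp_ne : (p : K) ≠ 0 := pK_ne_zero hK
  have hcmm_ne : ∀ m : ℕ, ((cC p m m : ℤ) : K) ≠ 0 := by
    intro m
    rw [cC_diag]
    push_cast
    exact pow_ne_zero _ hp_ne
  have hcoeff : ∀ m, PowerSeries.coeff m g' = PowerSeries.coeff m g := by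
    intro m
    induction m using Nat.strong_induction_on with
    | _ m ih =>
      have h3 : (p : K) * (∑ k ∈ Finset.range (m + 1),
            ι (PowerSeries.coeff k g') * ((cC p m k : ℤ) : K))
          = (p : K) * ∑ k ∈ Finset.range (m + 1),
            ι (PowerSeries.coeff k g) * ((cC p m k : ℤ) : K) :=
        (hg' m).symm.trans (hmain m)
      have hS := mul_left_cancel₀ hp_ne h3
      rw [Finset.sum_range_succ, Finset.sum_range_succ] at hS
      have hsmall : (∑ k ∈ Finset.range m,
            ι (PowerSeries.coeff k g') * ((cC p m k : ℤ) : K))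
          = ∑ k ∈ Finset.range m, ι (PowerSeries.coeff k g) * ((cC p m k : ℤ) : K) :=
        Finset.sum_congr rfl fun k hk => by rw [ih k (Finset.mem_range.mp hk)]
      rw [hsmall] at hS
      have h4 := add_left_cancel hS
      exact hι_inj (mul_right_cancel₀ (hcmm_ne m) h4)
  exact PowerSeries.ext hcoeff
end

section
/- Let R be a unique factorization domain, let ℓ_1, …, ℓ_m be pairwise non-associated prime elements of R, and let d ≥ 1 and f_1, …, f_d ∈ R be nonzero elements with f_d ∣ f_{d-1} ∣ ⋯ ∣ f_1 and f_1 ∣ ℓ_1 ⋯ ℓ_m. Suppose there exist natural numbers n_1, …, n_m such that ∏_{s=1}^d f_s is associated to ∏_{j=1}^m ℓ_j^{n_j}. Then for each s with 1 ≤ s ≤ d, f_s is associated to ∏_{j : n_j ≥ s} ℓ_j. -/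
/-- Let `R` be a UFD, `ℓ_1, …, ℓ_m` pairwise non-associated prime
elements of `R`, and `d ≥ 1`, `f_1, …, f_d ∈ R` nonzero with `f_d ∣ f_{d-1} ∣ ⋯ ∣ f_1`
and `f_1 ∣ ℓ_1 ⋯ ℓ_m`. Suppose there are naturals `n_1, …, n_m` such that `∏_s f_s` is
associated to `∏_j ℓ_j^{n_j}`. Then for each `s`, `f_s` is associated to
`∏_{j : n_j ≥ s} ℓ_j`. (Here `f : Fin d → R` with `f ⟨0,_⟩` playing the role of `f_1`,
so that index `s : Fin d` corresponds to `f_{s+1}`.) -/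
theorem stmt_11 (R : Type*) [CommRing R] [IsDomain R] [UniqueFactorizationMonoid R]
    (m : ℕ) (ℓ : Fin m → R) (hprime : ∀ j, Prime (ℓ j))
    (hdistinct : ∀ j k, j ≠ k → ¬ Associated (ℓ j) (ℓ k))
    (d : ℕ) (hd : 1 ≤ d) (f : Fin d → R) (hf0 : ∀ s, f s ≠ 0)
    (hchain : ∀ s t : Fin d, s ≤ t → f t ∣ f s)
    (hf1 : f ⟨0, hd⟩ ∣ ∏ j, ℓ j)
    (n : Fin m → ℕ)
    (hprod : Associated (∏ s, f s) (∏ j, ℓ j ^ n j)) :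
    ∀ s : Fin d,
      Associated (f s) (∏ j ∈ Finset.univ.filter fun j => (s : ℕ) + 1 ≤ n j, ℓ j) := by
  classical
  have hl0 : ∀ j, ℓ j ≠ 0 := fun j => (hprime j).ne_zero
  have hdvd_eq : ∀ j k : Fin m, ℓ j ∣ ℓ k → j = k := by
    intro j k h
    by_contra hne
    exact hdistinct j k hne ((hprime j).associated_of_dvd (hprime k) h)
  -- Key lemma: a divisor of a squarefree product of the primes is associated to a subproduct
  have key : ∀ (S : Finset (Fin m)) (x : R), x ∣ ∏ j ∈ S, ℓ j →
      Associated x (∏ j ∈ S.filter (fun j => ℓ j ∣ x), ℓ j) := by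
    intro S
    induction S using Finset.induction_on with
    | empty =>
      intro x hx
      simp only [Finset.prod_empty] at hx
      simpa using associated_one_iff_isUnit.mpr (isUnit_of_dvd_one hx)
    | @insert a S _ ih =>
      rename_i ha
      intro x hx
      rw [Finset.prod_insert ha] at hx
      by_cases hax : ℓ a ∣ x
      · obtain ⟨y, rfl⟩ := hax
        have hy : y ∣ ∏ j ∈ S, ℓ j := (mul_dvd_mul_iff_left (hl0 a)).mp hx
        have hfe : S.filter (fun j => ℓ j ∣ ℓ a * y) = S.filter (fun j => ℓ j ∣ y) := by
          apply Finset.filter_congr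
          intro j hj
          constructor
          · intro h
            rcases (hprime j).dvd_mul.mp h with h' | h'
            · exact absurd (hdvd_eq j a h' ▸ hj) ha
            · exact h'
          · exact fun h => h.mul_left _
        rw [Finset.filter_insert, if_pos (dvd_mul_right _ _), Finset.prod_insert
          (fun hmem => ha (Finset.mem_of_mem_filter a hmem)), hfe]
        exact (ih y hy).mul_left (ℓ a)
      · have hrel : IsRelPrime x (ℓ a) := by
          intro e hex hea
          obtain ⟨u, hu⟩ := hea
          rcases (hprime a).irreducible.isUnit_or_isUnit hu with h | h
          · exact h
          · exfalso
            apply hax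
            rw [hu]
            exact h.mul_right_dvd.mpr hex
        have hx' : x ∣ ∏ j ∈ S, ℓ j := hrel.dvd_of_dvd_mul_left hx
        rw [Finset.filter_insert, if_neg hax]
        exact ih x hx'
  -- every f s divides the squarefree product
  have hfs_dvd : ∀ s : Fin d, f s ∣ ∏ j, ℓ j := fun s =>
    dvd_trans (hchain ⟨0, hd⟩ s (Fin.mk_le_of_le_val (Nat.zero_le _))) hf1
  -- counts
  set c : Fin m → ℕ := fun j => (Finset.univ.filter (fun s : Fin d => ℓ j ∣ f s)).card with hc
  -- product of the f's is associated to ∏ ℓ^c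
  have hpc : Associated (∏ s, f s) (∏ j, ℓ j ^ c j) := by
    have h1 : Associated (∏ s, f s)
        (∏ s, ∏ j ∈ Finset.univ.filter (fun j => ℓ j ∣ f s), ℓ j) :=
      Associated.prod _ _ _ (fun s _ => key Finset.univ (f s) (hfs_dvd s))
    have h2 : (∏ s, ∏ j ∈ Finset.univ.filter (fun j => ℓ j ∣ f s), ℓ j)
        = ∏ j, ℓ j ^ c j := by
      have : (∏ s : Fin d, ∏ j ∈ Finset.univ.filter (fun j => ℓ j ∣ f s), ℓ j)
          = ∏ s : Fin d, ∏ j : Fin m, if ℓ j ∣ f s then ℓ j else 1 := by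
        refine Finset.prod_congr rfl fun s _ => ?_
        rw [Finset.prod_filter]
      rw [this, Finset.prod_comm]
      refine Finset.prod_congr rfl fun j _ => ?_
      rw [← Finset.prod_filter, Finset.prod_const]
    exact h2 ▸ h1
  -- exponents agree: c = n
  have hexp : ∀ (a b : Fin m → ℕ),
      Associated (∏ k, ℓ k ^ a k) (∏ k, ℓ k ^ b k) → ∀ j, a j ≤ b j := by
    intro a b hab j
    have h1 : ℓ j ^ a j ∣ ∏ k, ℓ k ^ b k :=
      (Finset.dvd_prod_of_mem (fun k => ℓ k ^ a k) (Finset.mem_univ j)).trans hab.dvd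
    rw [← Finset.mul_prod_erase Finset.univ _ (Finset.mem_univ j)] at h1
    have hnd : ¬ ℓ j ∣ ∏ k ∈ Finset.univ.erase j, ℓ k ^ b k := by
      intro h
      obtain ⟨k, hk, hdk⟩ := ((hprime j).dvd_finset_prod_iff _).mp h
      exact (Finset.mem_erase.mp hk).1 ((hdvd_eq j k ((hprime j).dvd_of_dvd_pow hdk)).symm)
    have h2 : ℓ j ^ a j ∣ ℓ j ^ b j :=
      (hprime j).pow_dvd_of_dvd_mul_right _ hnd h1
    exact (pow_dvd_pow_iff (hl0 j) (hprime j).not_unit).mp h2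
  have hcn : ∀ j, c j = n j := fun j =>
    le_antisymm (hexp c n (hpc.symm.trans hprod) j) (hexp n c (hprod.symm.trans hpc) j)
  -- membership characterization via downward closedness of the chain
  have hmem : ∀ (j : Fin m) (s : Fin d), ℓ j ∣ f s ↔ (s : ℕ) < c j := by
    intro j s
    constructor
    · intro h
      have hsub : Finset.Iic s ⊆ Finset.univ.filter (fun t => ℓ j ∣ f t) := by
        intro t ht
        rw [Finset.mem_filter]
        exact ⟨Finset.mem_univ t, h.trans (hchain t s (Finset.mem_Iic.mp ht))⟩
      have := Finset.card_le_card hsub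
      rw [Fin.card_Iic] at this
      simp only [hc]
      omega
    · intro h
      by_contra hnot
      have hsub : Finset.univ.filter (fun t => ℓ j ∣ f t) ⊆ Finset.Iio s := by
        intro t ht
        rw [Finset.mem_filter] at ht
        rw [Finset.mem_Iio]
        by_contra hts
        exact hnot (ht.2.trans (hchain s t (not_lt.mp hts)))
      have := Finset.card_le_card hsub
      rw [Fin.card_Iio] at this
      simp only [hc] at h
      omega
  -- conclude
  intro s
  have h := key Finset.univ (f s) (hfs_dvd s)
  have hfilter : Finset.univ.filter (fun j => ℓ j ∣ f s)
      = Finset.univ.filter (fun j => (s : ℕ) + 1 ≤ n j) := by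
    apply Finset.filter_congr
    intro j _
    rw [hmem j s, hcn j]
    omega
  rwa [hfilter] at h
end
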